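/- Let $F$ be a generalised quadratic form over the ring of integers $\mathfrak{o}$ of a Galois number field $K/\mathbb{Q}$, with coefficient matrix $(c_{i,j,\tau,\tau'})$ regarded as an $nd\times nd$ matrix of rank $\Delta$. Then there exists a constant $C_1>0$, depending only on $F$, such that for every non-zero integral ideal $\mathfrak{b}$ one has $|\mathfrak{o}^n/\mathcal{H}_\mathfrak{b}|\leq C_1(\mathrm{N}\mathfrak{b})^{\Delta}$. Moreover there is an integral ideal $\mathfrak{d}_1$ such that $C_1=1$ works for all $\mathfrak{b}$ coprime to $\mathfrak{d}_1$. -/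

import Mathlib

open NumberField
open scoped BigOperators

/-- The action of `Gal(K/ℚ)` on the ring of integers of `K`. -/
noncomputable def gact (K : Type*) [Field K] [NumberField K]
    (τ : K ≃ₐ[ℚ] K) : (𝓞 K) ≃ₐ[ℤ] (𝓞 K) :=
  galRestrict ℤ ℚ K (𝓞 K) τ

/-- The generalised quadratic form attached to a symmetric coefficient tuple
`c : Fin n → Fin n → Gal(K/ℚ) → Gal(K/ℚ) → 𝓞 K`. -/
noncomputable def gqf {K : Type*} [Field K] [NumberField K] {n : ℕ}
    (c : Fin n → Fin n → (K ≃ₐ[ℚ] K) → (K ≃ₐ[ℚ] K) → 𝓞 K)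
    (x : Fin n → 𝓞 K) : 𝓞 K :=
  ∑ i, ∑ j, ∑ τ : K ≃ₐ[ℚ] K, ∑ τ' : K ≃ₐ[ℚ] K,
    c i j τ τ' * gact K τ (x i) * gact K τ' (x j)

/-- The generalised bilinear form attached to `c`. -/
noncomputable def gbf {K : Type*} [Field K] [NumberField K] {n : ℕ}
    (c : Fin n → Fin n → (K ≃ₐ[ℚ] K) → (K ≃ₐ[ℚ] K) → 𝓞 K)
    (x y : Fin n → 𝓞 K) : 𝓞 K :=
  ∑ i, ∑ j, ∑ τ : K ≃ₐ[ℚ] K, ∑ τ' : K ≃ₐ[ℚ] K,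
    c i j τ τ' * gact K τ (x i) * gact K τ' (y j)

/-- The `G`-invariant ideal `ᴳ𝔟 = ⋂_{τ ∈ G} 𝔟^{τ⁻¹}`. -/
noncomputable def GIdeal {K : Type*} [Field K] [NumberField K]
    (G : Set (K ≃ₐ[ℚ] K)) (𝔟 : Ideal (𝓞 K)) : Ideal (𝓞 K) :=
  ⨅ τ ∈ G, Ideal.map (gact K τ.symm) 𝔟

lemma gbf_add_right {K : Type*} [Field K] [NumberField K] {n : ℕ}
    (c : Fin n → Fin n → (K ≃ₐ[ℚ] K) → (K ≃ₐ[ℚ] K) → 𝓞 K)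
    (a x y : Fin n → 𝓞 K) : gbf c a (x + y) = gbf c a x + gbf c a y := by
  simp [gbf, Pi.add_apply, map_add, mul_add, Finset.sum_add_distrib]

lemma gbf_neg_right {K : Type*} [Field K] [NumberField K] {n : ℕ}
    (c : Fin n → Fin n → (K ≃ₐ[ℚ] K) → (K ≃ₐ[ℚ] K) → 𝓞 K)
    (a x : Fin n → 𝓞 K) : gbf c a (-x) = - gbf c a x := by
  simp [gbf, Pi.neg_apply, map_neg, mul_neg, Finset.sum_neg_distrib]

/-- The subgroup `ℋ_𝔟 = {h ∈ 𝓞ⁿ : 2 B(a; h) ∈ 𝔟 ∀ a}`. -/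
noncomputable def Hsub {K : Type*} [Field K] [NumberField K] {n : ℕ}
    (c : Fin n → Fin n → (K ≃ₐ[ℚ] K) → (K ≃ₐ[ℚ] K) → 𝓞 K)
    (𝔟 : Ideal (𝓞 K)) : AddSubgroup (Fin n → 𝓞 K) where
  carrier := {h | ∀ a, 2 * gbf c a h ∈ 𝔟}
  zero_mem' := by
    intro a
    have : gbf c a (0 : Fin n → 𝓞 K) = 0 := by
      simp [gbf]
    simp [this]
  add_mem' := by
    intro x y hx hy a
    rw [gbf_add_right, mul_add]
    exact Ideal.add_mem _ (hx a) (hy a)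
  neg_mem' := by
    intro x hx a
    rw [gbf_neg_right, mul_neg]
    exact (Ideal.neg_mem_iff _).mpr (hx a)

/-- The subgroup `(ᴳ𝔟)ⁿ ⊆ 𝓞ⁿ`. -/
noncomputable def GIdealPow {K : Type*} [Field K] [NumberField K] (n : ℕ)
    (G : Set (K ≃ₐ[ℚ] K)) (𝔟 : Ideal (𝓞 K)) : AddSubgroup (Fin n → 𝓞 K) :=
  AddSubgroup.pi Set.univ fun _ => (GIdeal G 𝔟).toAddSubgroup

section StatementFiveAux

open Function Matrix

variable {K : Type*} [Field K] [NumberField K] {n : ℕ}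

/-- The coefficient matrix of the form, over `𝓞 K`. -/
noncomputable def colMat (c : Fin n → Fin n → (K ≃ₐ[ℚ] K) → (K ≃ₐ[ℚ] K) → 𝓞 K) :
    Matrix (Fin n × (K ≃ₐ[ℚ] K)) (Fin n × (K ≃ₐ[ℚ] K)) (𝓞 K) :=
  Matrix.of fun p q => c p.1 q.1 p.2 q.2

/-- The vector of Galois conjugates of the coordinates of `h`. -/
noncomputable def wvec (h : Fin n → 𝓞 K) : Fin n × (K ≃ₐ[ℚ] K) → 𝓞 K :=
  fun q => gact K q.2 (h q.1)

lemma wvec_add (h h' : Fin n → 𝓞 K) : wvec (h + h') = wvec h + wvec h' := by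
  funext q
  simp [wvec, map_add]

/-- The linear map underlying the bilinear form. -/
noncomputable def Tfun (c : Fin n → Fin n → (K ≃ₐ[ℚ] K) → (K ≃ₐ[ℚ] K) → 𝓞 K)
    (h : Fin n → 𝓞 K) : Fin n × (K ≃ₐ[ℚ] K) → 𝓞 K :=
  (colMat c).mulVec (wvec h)

lemma Tfun_add (c : Fin n → Fin n → (K ≃ₐ[ℚ] K) → (K ≃ₐ[ℚ] K) → 𝓞 K)
    (h h' : Fin n → 𝓞 K) : Tfun c (h + h') = Tfun c h + Tfun c h' := by
  unfold Tfun
  rw [wvec_add, Matrix.mulVec_add]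

/-- `Tfun` as an additive homomorphism. -/
noncomputable def Tadd (c : Fin n → Fin n → (K ≃ₐ[ℚ] K) → (K ≃ₐ[ℚ] K) → 𝓞 K) :
    (Fin n → 𝓞 K) →+ (Fin n × (K ≃ₐ[ℚ] K) → 𝓞 K) :=
  AddMonoidHom.mk' (Tfun c) (Tfun_add c)

lemma Tfun_mem_range (c : Fin n → Fin n → (K ≃ₐ[ℚ] K) → (K ≃ₐ[ℚ] K) → 𝓞 K)
    (h : Fin n → 𝓞 K) : Tfun c h ∈ LinearMap.range (colMat c).mulVecLin :=
  ⟨wvec h, rfl⟩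

/-- The key algebraic identity: the bilinear form as a pairing against `Tfun`. -/
lemma gbf_eq_sum (c : Fin n → Fin n → (K ≃ₐ[ℚ] K) → (K ≃ₐ[ℚ] K) → 𝓞 K)
    (a h : Fin n → 𝓞 K) :
    gbf c a h = ∑ p : Fin n × (K ≃ₐ[ℚ] K), gact K p.2 (a p.1) * Tfun c h p := by
  rw [gbf, Fintype.sum_prod_type]
  simp only [Tfun, Matrix.mulVec, dotProduct, colMat, wvec, Matrix.of_apply,
    Fintype.sum_prod_type, Finset.mul_sum]
  refine Finset.sum_congr rfl fun i _ => ?_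
  rw [Finset.sum_comm]
  refine Finset.sum_congr rfl fun j _ => ?_
  refine Finset.sum_congr rfl fun τ _ => ?_
  refine Finset.sum_congr rfl fun τ' _ => ?_
  ring

/-- Membership of all coordinates in an ideal for elements of `𝔟 • W`. -/
lemma coord_mem_of_mem_smul {𝔟 : Ideal (𝓞 K)}
    {W : Submodule (𝓞 K) (Fin n × (K ≃ₐ[ℚ] K) → 𝓞 K)}
    {x : Fin n × (K ≃ₐ[ℚ] K) → 𝓞 K} (hx : x ∈ 𝔟 • W)
    (p : Fin n × (K ≃ₐ[ℚ] K)) : x p ∈ 𝔟 := by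
  refine Submodule.smul_induction_on hx ?_ ?_
  · intro b hb m _
    exact Ideal.mul_mem_right _ _ hb
  · intro y z hy hz
    exact Ideal.add_mem _ hy hz

/-- The key index bound: the index of `Hsub` is at most the cardinality of the image of
the column space modulo `J`, for any submodule `J` all of whose elements have all coordinates
in `𝔟`. -/
lemma Hsub_index_le (c : Fin n → Fin n → (K ≃ₐ[ℚ] K) → (K ≃ₐ[ℚ] K) → 𝓞 K)
    (𝔟 : Ideal (𝓞 K)) (J : Submodule (𝓞 K) (Fin n × (K ≃ₐ[ℚ] K) → 𝓞 K))
    (hJ : ∀ x ∈ J, ∀ p, x p ∈ 𝔟)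
    (hfin : Set.Finite ((Submodule.map J.mkQ (LinearMap.range (colMat c).mulVecLin)) :
      Set ((Fin n × (K ≃ₐ[ℚ] K) → 𝓞 K) ⧸ J))) :
    (Hsub c 𝔟).index ≤
      Nat.card (Submodule.map J.mkQ (LinearMap.range (colMat c).mulVecLin)) := by
  classical
  set φ : (Fin n → 𝓞 K) →+ ((Fin n × (K ≃ₐ[ℚ] K) → 𝓞 K) ⧸ J) :=
    J.mkQ.toAddMonoidHom.comp (Tadd c) with hφ
  have hφ_apply : ∀ h, φ h = J.mkQ (Tfun c h) := fun h => rfl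
  have hker : φ.ker ≤ Hsub c 𝔟 := by
    intro h hh
    have hT : Tfun c h ∈ J := by
      have h0 : J.mkQ (Tfun c h) = 0 := hh
      rwa [Submodule.mkQ_apply, Submodule.Quotient.mk_eq_zero] at h0
    intro a
    rw [gbf_eq_sum, Finset.mul_sum]
    refine Ideal.sum_mem _ fun p _ => ?_
    exact Ideal.mul_mem_left _ _ (Ideal.mul_mem_left _ _ (hJ _ hT p))
  have hsub : (φ.range : Set ((Fin n × (K ≃ₐ[ℚ] K) → 𝓞 K) ⧸ J)) ⊆
      ((Submodule.map J.mkQ (LinearMap.range (colMat c).mulVecLin)) :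
        Set ((Fin n × (K ≃ₐ[ℚ] K) → 𝓞 K) ⧸ J)) := by
    rintro z ⟨h, rfl⟩
    exact ⟨Tfun c h, Tfun_mem_range c h, rfl⟩
  have hrfin : (φ.range : Set ((Fin n × (K ≃ₐ[ℚ] K) → 𝓞 K) ⧸ J)).Finite := hfin.subset hsub
  have h1 : φ.ker.index = Nat.card φ.range := AddSubgroup.index_ker φ
  have hpos : 0 < φ.ker.index := by
    rw [h1]
    have : Finite φ.range := hrfin.to_subtype
    exact Nat.card_pos
  calc (Hsub c 𝔟).index ≤ φ.ker.index :=
        Nat.le_of_dvd hpos (AddSubgroup.index_dvd_of_le hker)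
    _ = Nat.card φ.range := h1
    _ ≤ _ := Nat.card_mono hfin hsub

end StatementFiveAux

section StatementFiveMain

open Function Matrix

variable {K : Type*} [Field K] [NumberField K] {n : ℕ}

/-- The coefficient matrix over `K`. -/
noncomputable def AK (c : Fin n → Fin n → (K ≃ₐ[ℚ] K) → (K ≃ₐ[ℚ] K) → 𝓞 K) :
    Matrix (Fin n × (K ≃ₐ[ℚ] K)) (Fin n × (K ≃ₐ[ℚ] K)) K :=
  Matrix.of fun p q : Fin n × (K ≃ₐ[ℚ] K) => ((c p.1 q.1 p.2 q.2 : K))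

set_option maxHeartbeats 1000000 in
set_option synthInstance.maxHeartbeats 200000 in
lemma statement_five_main (c : Fin n → Fin n → (K ≃ₐ[ℚ] K) → (K ≃ₐ[ℚ] K) → 𝓞 K) :
    ∃ (C₁ : ℕ) (𝔡₁ : Ideal (𝓞 K)), 0 < C₁ ∧ 𝔡₁ ≠ ⊥ ∧
      (∀ 𝔟 : Ideal (𝓞 K), 𝔟 ≠ ⊥ →
        (Hsub c 𝔟).index ≤ C₁ * Ideal.absNorm 𝔟 ^ (AK c).rank) ∧
      (∀ 𝔟 : Ideal (𝓞 K), 𝔟 ≠ ⊥ → 𝔟 + 𝔡₁ = ⊤ →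
        (Hsub c 𝔟).index ≤ Ideal.absNorm 𝔟 ^ (AK c).rank) := by
  classical
  set L' : Submodule (𝓞 K) (Fin n × (K ≃ₐ[ℚ] K) → 𝓞 K) :=
    LinearMap.range (colMat c).mulVecLin with hL'def
  obtain ⟨t, hts, hspan, hli⟩ := exists_linearIndependent K (Set.range (AK c)ᵀ)
  have htfin : t.Finite := (Set.finite_range _).subset hts
  haveI : Fintype t := htfin.fintype
  choose f hf using fun x : t => (hts x.2 : _ ∈ Set.range (AK c)ᵀ)
  have hfinj : Function.Injective f := by
    intro x y hxy
    apply Subtype.ext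
    rw [← hf x, ← hf y, hxy]
  set t' : Finset (Fin n × (K ≃ₐ[ℚ] K)) := Finset.univ.image f with ht'def
  have himage : (AK c)ᵀ '' ↑t' = t := by
    ext x
    constructor
    · rintro ⟨q, hq, rfl⟩
      simp only [ht'def, Finset.coe_image, Finset.coe_univ, Set.image_univ,
        Set.mem_range] at hq
      obtain ⟨y, rfl⟩ := hq
      rw [hf y]
      exact y.2
    · intro hx
      exact ⟨f ⟨x, hx⟩, by simp [ht'def], hf ⟨x, hx⟩⟩
  have hcardt' : t'.card = (AK c).rank := by
    have h1 : t'.card = Fintype.card t := by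
      rw [ht'def, Finset.card_image_of_injective _ hfinj, Finset.card_univ]
    have h2 : (AK c).rank = t.toFinset.card := by
      rw [Matrix.rank_eq_finrank_span_cols, show (AK c).col = (AK c)ᵀ from rfl, ← hspan, finrank_span_set_eq_card hli]
    rw [h2, Set.toFinset_card, h1]
  set colR : Fin n × (K ≃ₐ[ℚ] K) → (Fin n × (K ≃ₐ[ℚ] K) → 𝓞 K) :=
    fun q => (colMat c)ᵀ q with hcolRdef
  set g : (↥t' → 𝓞 K) →ₗ[𝓞 K] (Fin n × (K ≃ₐ[ℚ] K) → 𝓞 K) :=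
    Fintype.linearCombination (𝓞 K) (fun q : ↥t' => colR ↑q) with hgdef
  set L'' : Submodule (𝓞 K) (Fin n × (K ≃ₐ[ℚ] K) → 𝓞 K) := LinearMap.range g with hL''def
  have hgapply : ∀ u, g u = ∑ q : ↥t', u q • colR ↑q := fun u =>
    Fintype.linearCombination_apply _ _ u
  have hcolL' : ∀ q, colR q ∈ L' := by
    intro q
    refine ⟨Pi.single q 1, ?_⟩
    rw [Matrix.mulVecLin_apply, Matrix.mulVec_single]
    funext p
    simp [hcolRdef, Matrix.transpose_apply]
  have hcolL'' : ∀ p : ↥t', colR ↑p ∈ L'' := by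
    intro p
    refine ⟨Pi.single p 1, ?_⟩
    rw [hgapply]
    rw [Finset.sum_eq_single p]
    · simp
    · intro b _ hb
      simp [Pi.single_eq_of_ne hb]
    · intro hp
      exact absurd (Finset.mem_univ p) hp
  have hL''le : L'' ≤ L' := by
    rintro x ⟨u, rfl⟩
    rw [hgapply]
    exact Submodule.sum_mem _ fun q _ => Submodule.smul_mem _ _ (hcolL' ↑q)
  have hL'span : L' = Submodule.span (𝓞 K) (Set.range colR) :=
    Matrix.range_mulVecLin _
  have hcast : ∀ (q w : Fin n × (K ≃ₐ[ℚ] K)),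
      (AK c)ᵀ q w = algebraMap (𝓞 K) K (colR q w) := by
    intro q w
    rfl
  have hclear : ∀ q, ∃ d : 𝓞 K, d ≠ 0 ∧ d • colR q ∈ L'' := by
    intro q
    have hcolK : (AK c)ᵀ q ∈
        Submodule.span K (Set.range fun p : ↥t' => (AK c)ᵀ ↑p) := by
      have h1 : (Set.range fun p : ↥t' => (AK c)ᵀ ↑p) = (AK c)ᵀ '' ↑t' :=
        (Set.image_eq_range _ _).symm
      rw [h1, himage, hspan]
      exact Submodule.subset_span ⟨q, rfl⟩
    obtain ⟨u, hu⟩ := (Submodule.mem_span_range_iff_exists_fun K).mp hcolK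
    obtain ⟨b, hb⟩ := IsLocalization.exist_integer_multiples
      (nonZeroDivisors (𝓞 K)) Finset.univ u
    choose r hr using fun p : ↥t' => hb p (Finset.mem_univ p)
    refine ⟨(b : 𝓞 K), nonZeroDivisors.coe_ne_zero b, ⟨r, ?_⟩⟩
    apply funext
    intro w
    apply NumberField.RingOfIntegers.coe_injective
    have huw := congrFun hu w
    simp only [Finset.sum_apply, Pi.smul_apply, smul_eq_mul] at huw
    have hgr : g r w = ∑ p : ↥t', r p * colR ↑p w := by
      rw [hgapply]
      simp
    calc algebraMap (𝓞 K) K (g r w)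
        = ∑ p : ↥t', algebraMap (𝓞 K) K (r p) * algebraMap (𝓞 K) K (colR ↑p w) := by
          rw [hgr, map_sum]
          exact Finset.sum_congr rfl fun p _ => map_mul _ _ _
      _ = ∑ p : ↥t', algebraMap (𝓞 K) K (b : 𝓞 K) * (u p * (AK c)ᵀ ↑p w) := by
          refine Finset.sum_congr rfl fun p _ => ?_
          rw [hr p, ← hcast, Algebra.smul_def, mul_assoc]
      _ = algebraMap (𝓞 K) K (b : 𝓞 K) * ((AK c)ᵀ q w) := by
          rw [← Finset.mul_sum, huw]
      _ = algebraMap (𝓞 K) K (((b : 𝓞 K) • colR q) w) := by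
          rw [hcast, Pi.smul_apply, _root_.smul_eq_mul, _root_.map_mul]
  choose dfun hd0 hdmem using hclear
  set D : 𝓞 K := ∏ q, dfun q with hDdef
  have hD0 : D ≠ 0 := Finset.prod_ne_zero_iff.mpr fun q _ => hd0 q
  have hDcol : ∀ q, D • colR q ∈ L'' := by
    intro q
    have hsplit : D = (∏ p ∈ Finset.univ.erase q, dfun p) * dfun q := by
      rw [Finset.prod_erase_mul _ _ (Finset.mem_univ q)]
    rw [hsplit, mul_smul]
    exact Submodule.smul_mem _ _ (hdmem q)
  have hDL : ∀ x ∈ L', D • x ∈ L'' := by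
    intro x hx
    rw [hL'span] at hx
    induction hx using Submodule.span_induction with
    | mem y hy =>
      obtain ⟨q, rfl⟩ := hy
      exact hDcol q
    | zero => simp
    | add a b _ _ ha hb => rw [smul_add]; exact Submodule.add_mem _ ha hb
    | smul a y _ hy => rw [smul_comm]; exact Submodule.smul_mem _ _ hy
  set Dn : ℕ := Ideal.absNorm (Ideal.span {D}) with hDndef
  have hDn0 : Dn ≠ 0 := by
    rw [hDndef, Ne, Ideal.absNorm_eq_zero_iff, Ideal.span_singleton_eq_bot]
    exact hD0
  have hDnmem : ((Dn : 𝓞 K)) ∈ Ideal.span {D} := Ideal.absNorm_mem _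
  obtain ⟨e, he⟩ := Ideal.mem_span_singleton'.mp hDnmem
  have hDnL : ∀ x ∈ L', (Dn : 𝓞 K) • x ∈ L'' := by
    intro x hx
    rw [← he, mul_smul]
    exact Submodule.smul_mem _ _ (hDL x hx)
  set N : Submodule (𝓞 K) ↥L' := Submodule.comap L'.subtype L'' with hNdef
  haveI : IsNoetherian ℤ (Fin n × (K ≃ₐ[ℚ] K) → 𝓞 K) := isNoetherian_pi
  haveI : IsNoetherian ℤ ↥(L'.restrictScalars ℤ) := isNoetherian_submodule' _
  haveI hfinL' : Module.Finite ℤ ↥L' := by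
    have e' : ↥(L'.restrictScalars ℤ) ≃ₗ[ℤ] ↥L' :=
      AddEquiv.toIntLinearEquiv (AddEquiv.refl _)
    exact Module.Finite.equiv e'
  haveI : Module.Finite ℤ (↥L' ⧸ N) :=
    Module.Finite.of_surjective (N.mkQ.toAddMonoidHom.toIntLinearMap)
      (Submodule.Quotient.mk_surjective N)
  haveI hYfin : Finite (↥L' ⧸ N) := by
    refine Module.finite_of_fg_torsion _ ?_
    intro y
    refine ⟨⟨(Dn : ℤ), mem_nonZeroDivisors_of_ne_zero (by exact_mod_cast hDn0)⟩, ?_⟩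
    obtain ⟨x, rfl⟩ := Submodule.Quotient.mk_surjective N y
    rw [Submonoid.smul_def]
    have hmem : (Dn : 𝓞 K) • x ∈ N := by
      have hsub : L'.subtype ((Dn : 𝓞 K) • x) = (Dn : 𝓞 K) • (x : Fin n × (K ≃ₐ[ℚ] K) → 𝓞 K) :=
        map_smul _ _ _
      rw [hNdef, Submodule.mem_comap, hsub]
      exact hDnL _ x.2
    have key : ((Dn : 𝓞 K)) • (Submodule.Quotient.mk x : ↥L' ⧸ N) = 0 := by
      rw [← Submodule.Quotient.mk_smul N, Submodule.Quotient.mk_eq_zero]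
      exact hmem
    calc ((Dn : ℤ)) • (Submodule.Quotient.mk x : ↥L' ⧸ N)
        = (((Dn : ℤ) : 𝓞 K)) • (Submodule.Quotient.mk x : ↥L' ⧸ N) :=
          (Int.cast_smul_eq_zsmul (𝓞 K) _ _).symm
      _ = ((Dn : 𝓞 K)) • (Submodule.Quotient.mk x : ↥L' ⧸ N) := by
          norm_cast
      _ = 0 := key
  have hQcard : ∀ (𝔟 : Ideal (𝓞 K)), 𝔟 ≠ ⊥ →
      Finite ((↥t' → 𝓞 K) ⧸ Submodule.pi Set.univ fun _ : ↥t' => 𝔟) ∧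
      Nat.card ((↥t' → 𝓞 K) ⧸ Submodule.pi Set.univ fun _ : ↥t' => 𝔟)
        = Ideal.absNorm 𝔟 ^ t'.card := by
    intro 𝔟 h𝔟
    haveI : Fintype (𝓞 K ⧸ 𝔟) := @Fintype.ofFinite _ (Ideal.finiteQuotientOfFreeOfNeBot 𝔟 h𝔟)
    have eQ : ((↥t' → 𝓞 K) ⧸ Submodule.pi Set.univ fun _ : ↥t' => 𝔟) ≃ₗ[𝓞 K]
        (↥t' → 𝓞 K ⧸ 𝔟) := Submodule.quotientPi _
    constructor
    · exact Finite.of_equiv _ eQ.symm.toEquiv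
    · rw [Nat.card_congr eQ.toEquiv, Nat.card_fun, Ideal.absNorm_apply,
        Submodule.cardQuot_apply]
      congr 1
      rw [Nat.card_eq_fintype_card, Fintype.card_coe]
  have hgpi : ∀ (𝔟 : Ideal (𝓞 K)) v, v ∈ (Submodule.pi Set.univ fun _ : ↥t' => 𝔟) →
      g v ∈ 𝔟 • L'' := by
    intro 𝔟 v hv
    rw [hgapply]
    exact Submodule.sum_mem _ fun p _ =>
      Submodule.smul_mem_smul (hv p (Set.mem_univ p)) (hcolL'' p)
  refine ⟨Nat.card (↥L' ⧸ N), Ideal.span {D}, Nat.card_pos,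
    by rwa [Ne, Ideal.span_singleton_eq_bot], ?_, ?_⟩
  · -- general bound
    intro 𝔟 h𝔟
    obtain ⟨hQfin, hQcard𝔟⟩ := hQcard 𝔟 h𝔟
    haveI := hQfin
    set J : Submodule (𝓞 K) (Fin n × (K ≃ₐ[ℚ] K) → 𝓞 K) := 𝔟 • L'' with hJdef
    set F : (((↥t' → 𝓞 K) ⧸ Submodule.pi Set.univ fun _ : ↥t' => 𝔟) × (↥L' ⧸ N)) →
        ↥(Submodule.map J.mkQ L') := fun z =>
      ⟨J.mkQ (g (Quotient.out z.1) + ((Quotient.out z.2 : ↥L') : _)),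
        Submodule.mem_map_of_mem
          (Submodule.add_mem _ (hL''le ⟨_, rfl⟩) (Quotient.out z.2).2)⟩ with hFdef
    have hFsurj : Surjective F := by
      rintro ⟨z, hz⟩
      obtain ⟨x, hxL', hmkx⟩ := hz
      set γ : ↥L' ⧸ N := Submodule.Quotient.mk ⟨x, hxL'⟩ with hγdef
      have hout : Submodule.Quotient.mk (Quotient.out γ) = γ := by
        exact Quotient.out_eq _
      have h1 : Quotient.out γ - (⟨x, hxL'⟩ : ↥L') ∈ N :=
        (Submodule.Quotient.eq N).mp hout
      have h2 : x - ((Quotient.out γ : ↥L') : Fin n × (K ≃ₐ[ℚ] K) → 𝓞 K) ∈ L'' := by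
        have h3 : ((Quotient.out γ : ↥L') : Fin n × (K ≃ₐ[ℚ] K) → 𝓞 K) - x ∈ L'' := h1
        have := Submodule.neg_mem _ h3
        rwa [neg_sub] at this
      obtain ⟨u, hu⟩ := h2
      refine ⟨(Submodule.Quotient.mk u, γ), ?_⟩
      apply Subtype.ext
      show J.mkQ _ = z
      have houtβ : Submodule.Quotient.mk (p := Submodule.pi Set.univ fun _ : ↥t' => 𝔟)
          (Quotient.out (Submodule.Quotient.mk u :
            (↥t' → 𝓞 K) ⧸ Submodule.pi Set.univ fun _ : ↥t' => 𝔟))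
          = Submodule.Quotient.mk u := by
        exact Quotient.out_eq _
      have hβmem : g (Quotient.out (Submodule.Quotient.mk u :
          (↥t' → 𝓞 K) ⧸ Submodule.pi Set.univ fun _ : ↥t' => 𝔟)) - g u ∈ J := by
        rw [← map_sub]
        exact hgpi 𝔟 _ ((Submodule.Quotient.eq _).mp houtβ)
      have hstep : J.mkQ (g (Quotient.out (Submodule.Quotient.mk u :
            (↥t' → 𝓞 K) ⧸ Submodule.pi Set.univ fun _ : ↥t' => 𝔟))
            + ((Quotient.out γ : ↥L') : Fin n × (K ≃ₐ[ℚ] K) → 𝓞 K))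
          = J.mkQ (g u + ((Quotient.out γ : ↥L') : Fin n × (K ≃ₐ[ℚ] K) → 𝓞 K)) := by
        rw [Submodule.mkQ_apply, Submodule.mkQ_apply, Submodule.Quotient.eq]
        simpa using hβmem
      rw [hstep, hu, sub_add_cancel]
      exact hmkx
    haveI hmapfin : Finite ↥(Submodule.map J.mkQ L') := Finite.of_surjective F hFsurj
    have hidx := Hsub_index_le c 𝔟 J
      (fun x hx p => coord_mem_of_mem_smul hx p) (Set.toFinite _)
    calc (Hsub c 𝔟).index ≤ Nat.card ↥(Submodule.map J.mkQ L') := hidx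
      _ ≤ Nat.card ((((↥t' → 𝓞 K) ⧸ Submodule.pi Set.univ fun _ : ↥t' => 𝔟)) × (↥L' ⧸ N)) :=
          Nat.card_le_card_of_surjective F hFsurj
      _ = Ideal.absNorm 𝔟 ^ t'.card * Nat.card (↥L' ⧸ N) := by
          rw [Nat.card_prod, hQcard𝔟]
      _ = Nat.card (↥L' ⧸ N) * Ideal.absNorm 𝔟 ^ (AK c).rank := by
          rw [hcardt', mul_comm]
  · -- coprime bound
    intro 𝔟 h𝔟 hcop
    obtain ⟨hQfin, hQcard𝔟⟩ := hQcard 𝔟 h𝔟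
    haveI := hQfin
    set J : Submodule (𝓞 K) (Fin n × (K ≃ₐ[ℚ] K) → 𝓞 K) := 𝔟 • L' with hJdef
    set F : ((↥t' → 𝓞 K) ⧸ Submodule.pi Set.univ fun _ : ↥t' => 𝔟) →
        ↥(Submodule.map J.mkQ L') := fun β =>
      ⟨J.mkQ (g (Quotient.out β)),
        Submodule.mem_map_of_mem (hL''le ⟨_, rfl⟩)⟩ with hFdef
    have hFsurj : Surjective F := by
      rintro ⟨z, hz⟩
      obtain ⟨x, hxL', hmkx⟩ := hz
      have h1 : (1 : 𝓞 K) ∈ 𝔟 ⊔ Ideal.span {D} := by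
        rw [← Submodule.add_eq_sup, hcop]
        exact Submodule.mem_top
      obtain ⟨b, hb, y, hy, hby⟩ := Submodule.mem_sup.mp h1
      obtain ⟨a, ha⟩ := Ideal.mem_span_singleton'.mp hy
      have hyx : y • x ∈ L'' := by
        rw [← ha, mul_smul]
        exact Submodule.smul_mem _ _ (hDL x hxL')
      obtain ⟨u, hu⟩ := hyx
      refine ⟨Submodule.Quotient.mk u, ?_⟩
      apply Subtype.ext
      show J.mkQ _ = z
      have houtβ : Submodule.Quotient.mk (p := Submodule.pi Set.univ fun _ : ↥t' => 𝔟)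
          (Quotient.out (Submodule.Quotient.mk u :
            (↥t' → 𝓞 K) ⧸ Submodule.pi Set.univ fun _ : ↥t' => 𝔟))
          = Submodule.Quotient.mk u := by
        exact Quotient.out_eq _
      have hβmem : g (Quotient.out (Submodule.Quotient.mk u :
          (↥t' → 𝓞 K) ⧸ Submodule.pi Set.univ fun _ : ↥t' => 𝔟)) - g u ∈ J := by
        rw [← map_sub]
        exact smul_mono_right 𝔟 hL''le
          (hgpi 𝔟 _ ((Submodule.Quotient.eq _).mp houtβ))
      have hstep : J.mkQ (g (Quotient.out (Submodule.Quotient.mk u :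
            (↥t' → 𝓞 K) ⧸ Submodule.pi Set.univ fun _ : ↥t' => 𝔟)))
          = J.mkQ (g u) := by
        rw [Submodule.mkQ_apply, Submodule.mkQ_apply, Submodule.Quotient.eq]
        simpa using hβmem
      have hyx' : y • x = x - b • x := by
        have hsum : b • x + y • x = x := by
          rw [← add_smul, hby, one_smul]
        exact eq_sub_of_add_eq' hsum
      have hbx : J.mkQ (b • x) = 0 := by
        rw [Submodule.mkQ_apply, Submodule.Quotient.mk_eq_zero]
        exact Submodule.smul_mem_smul hb hxL'
      rw [hstep, hu, hyx', map_sub, hbx, sub_zero]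
      exact hmkx
    haveI hmapfin : Finite ↥(Submodule.map J.mkQ L') := Finite.of_surjective F hFsurj
    have hidx := Hsub_index_le c 𝔟 J
      (fun x hx p => coord_mem_of_mem_smul hx p) (Set.toFinite _)
    calc (Hsub c 𝔟).index ≤ Nat.card ↥(Submodule.map J.mkQ L') := hidx
      _ ≤ Nat.card ((↥t' → 𝓞 K) ⧸ Submodule.pi Set.univ fun _ : ↥t' => 𝔟) :=
          Nat.card_le_card_of_surjective F hFsurj
      _ = Ideal.absNorm 𝔟 ^ (AK c).rank := by rw [hQcard𝔟, hcardt']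

end StatementFiveMain

/-- Let `F` be a generalised quadratic form over `𝓞 K`, with
coefficient matrix of rank `Δ` (as an `nd × nd` matrix over `K`).  Then there
is a constant `C₁ > 0`, depending only on `F`, with
`|𝓞ⁿ/ℋ_𝔟| ≤ C₁ (N𝔟)^Δ` for every non-zero integral ideal `𝔟`; moreover there
is a non-zero integral ideal `𝔡₁` such that `C₁ = 1` works for all `𝔟`
coprime to `𝔡₁`. -/
theorem index_H_le_norm_pow_rank
    (K : Type*) [Field K] [NumberField K] [IsGalois ℚ K] (n : ℕ)
    (c : Fin n → Fin n → (K ≃ₐ[ℚ] K) → (K ≃ₐ[ℚ] K) → 𝓞 K)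
    (hsym : ∀ i j τ τ', c i j τ τ' = c j i τ' τ) :
    ∃ C₁ : ℕ, 0 < C₁ ∧
      (∀ 𝔟 : Ideal (𝓞 K), 𝔟 ≠ ⊥ →
        (Hsub c 𝔟).index ≤
          C₁ * Ideal.absNorm 𝔟 ^
            (Matrix.rank (Matrix.of
              (fun p q : Fin n × (K ≃ₐ[ℚ] K) =>
                ((c p.1 q.1 p.2 q.2 : K)))))) ∧
      (∃ 𝔡₁ : Ideal (𝓞 K), 𝔡₁ ≠ ⊥ ∧
        ∀ 𝔟 : Ideal (𝓞 K), 𝔟 ≠ ⊥ → 𝔟 + 𝔡₁ = ⊤ →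
          (Hsub c 𝔟).index ≤
            Ideal.absNorm 𝔟 ^
              (Matrix.rank (Matrix.of
                (fun p q : Fin n × (K ≃ₐ[ℚ] K) =>
                  ((c p.1 q.1 p.2 q.2 : K)))))) := by
  obtain ⟨C₁, 𝔡₁, hC₁, h𝔡₁, hA, hB⟩ := statement_five_main c
  exact ⟨C₁, hC₁, hA, ⟨𝔡₁, h𝔡₁, hB⟩⟩
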